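/- Fix integers k ≥ 1 and n with n ≥ max(k, 2). There exist an integer m with m ≤ 2k·log₂ n + 2, a hash function hash₁ : {0,1}^n → {0,1}^m, and a decoding map D : {0,1}^{n−k} × {0,1}^m → {0,1}^n, such that for every x ∈ {0,1}^n and every y ∈ σ_k(x), one has D(y, hash₁(x)) = x. -/

import Mathlib

open scoped Classical

/-- `Subseq k x` is the set of all subsequences of `x` obtained by deleting exactly `k` symbols,
i.e. all subsequences of `x` of length `|x| - k`. -/
def Subseq {α : Type*} (k : ℕ) (x : List α) : Set (List α) :=
  {y | y.Sublist x ∧ y.length + k = x.length}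

/-- All boolean lists of length `n`. -/
def lists : ℕ → Finset (List Bool)
  | 0 => {[]}
  | n+1 => ((lists n).image (List.cons true)) ∪ ((lists n).image (List.cons false))

lemma mem_lists : ∀ (n : ℕ) (l : List Bool), l ∈ lists n ↔ l.length = n
  | 0, l => by simp [lists, List.length_eq_zero_iff]
  | n+1, [] => by simp [lists]
  | n+1, (b :: t) => by
      cases b <;> simp [lists, mem_lists n t, eq_comm]

lemma card_lists (n : ℕ) : (lists n).card ≤ 2 ^ n := by
  induction n with
  | zero => simp [lists]
  | succ n ih =>
      refine le_trans (Finset.card_union_le _ _) ?_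
      have h1 := Finset.card_image_le (s := lists n) (f := List.cons true)
      have h2 := Finset.card_image_le (s := lists n) (f := List.cons false)
      have : 2 ^ (n+1) = 2 ^ n + 2 ^ n := by ring
      omega

/-- Select the entries of `b` at positions where the mask is `true`. -/
def sel : List Bool → List Bool → List Bool
  | true :: ms, a :: as => a :: sel ms as
  | false :: ms, _ :: as => sel ms as
  | _, _ => []

/-- Select the entries of `b` at positions where the mask is `false`. -/
def seln : List Bool → List Bool → List Bool
  | true :: ms, _ :: as => seln ms as
  | false :: ms, a :: as => a :: seln ms as
  | _, _ => []

/-- Merge two lists according to a mask. -/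
def merge : List Bool → List Bool → List Bool → List Bool
  | true :: ms, a :: ys, zs => a :: merge ms ys zs
  | false :: ms, ys, b :: zs => b :: merge ms ys zs
  | _, _, _ => []

lemma merge_sel : ∀ (m b : List Bool), m.length = b.length →
    merge m (sel m b) (seln m b) = b
  | [], [], _ => rfl
  | true :: ms, a :: as, h => by
      simp only [sel, seln, merge, merge_sel ms as (by simpa using h)]
  | false :: ms, a :: as, h => by
      simp only [sel, seln, merge, merge_sel ms as (by simpa using h)]
  | [], _ :: _, h => by simp at h
  | _ :: _, [], h => by simp at h

lemma sel_length : ∀ (m b : List Bool), m.length = b.length →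
    (sel m b).length = m.count true
  | [], [], _ => rfl
  | true :: ms, a :: as, h => by
      simp [sel, sel_length ms as (by simpa using h), List.count_cons]
  | false :: ms, a :: as, h => by
      simp [sel, sel_length ms as (by simpa using h), List.count_cons]
  | [], _ :: _, h => by simp at h
  | _ :: _, [], h => by simp at h

lemma seln_length : ∀ (m b : List Bool), m.length = b.length →
    (seln m b).length = m.count false
  | [], [], _ => rfl
  | true :: ms, a :: as, h => by
      simp [seln, seln_length ms as (by simpa using h), List.count_cons]
  | false :: ms, a :: as, h => by
      simp [seln, seln_length ms as (by simpa using h), List.count_cons]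
  | [], _ :: _, h => by simp at h
  | _ :: _, [], h => by simp at h

lemma count_true_add_count_false : ∀ m : List Bool,
    m.count true + m.count false = m.length
  | [] => rfl
  | b :: m => by
      have := count_true_add_count_false m
      cases b <;> simp [List.count_cons] <;> omega

lemma exists_mask {y b : List Bool} (h : y.Sublist b) :
    ∃ m : List Bool, m.length = b.length ∧ sel m b = y := by
  induction h with
  | slnil => exact ⟨[], rfl, rfl⟩
  | @cons l₁ l₂ a h ih =>
      obtain ⟨m, hm1, hm2⟩ := ih
      exact ⟨false :: m, by simp [hm1], by simp [sel, hm2]⟩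
  | @cons_cons l₁ l₂ a h ih =>
      obtain ⟨m, hm1, hm2⟩ := ih
      exact ⟨true :: m, by simp [hm1], by simp [sel, hm2]⟩

lemma card_masks : ∀ (n j : ℕ),
    ((lists n).filter (fun l => l.count true = j)).card ≤ n.choose j := by
  intro n
  induction n with
  | zero =>
      intro j
      cases j with
      | zero => simp [lists, Finset.filter_singleton]
      | succ j => simp [lists, Finset.filter_singleton]
  | succ n ih =>
      intro j
      rw [show lists (n+1) = ((lists n).image (List.cons true)) ∪
            ((lists n).image (List.cons false)) from rfl, Finset.filter_union]
      refine le_trans (Finset.card_union_le _ _) ?_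
      have h1 : ((lists n).image (List.cons true)).filter (fun l => l.count true = j)
          = ((lists n).filter (fun l => l.count true + 1 = j)).image (List.cons true) := by
        rw [Finset.filter_image]
        congr 1
        try (ext l; simp [List.count_cons])
      have h2 : ((lists n).image (List.cons false)).filter (fun l => l.count true = j)
          = ((lists n).filter (fun l => l.count true = j)).image (List.cons false) := by
        rw [Finset.filter_image]
        congr 1
        try (ext l; simp [List.count_cons])
      rw [h1, h2]
      cases j with
      | zero =>
          have : ((lists n).filter (fun l => l.count true + 1 = 0)) = ∅ := by
            apply Finset.filter_false_of_mem
            intro l _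
            omega
          simp only [this, Finset.image_empty, Finset.card_empty, Nat.zero_add,
            Nat.choose_zero_right]
          exact le_trans Finset.card_image_le (le_trans (ih 0) (by simp))
      | succ j =>
          have he : ((lists n).filter (fun l => l.count true + 1 = j + 1))
              = ((lists n).filter (fun l => l.count true = j)) := by
            ext l
            simp only [Finset.mem_filter]
            constructor <;> rintro ⟨ha, hb⟩ <;> exact ⟨ha, by omega⟩
          rw [he]
          have b1 : (Finset.image (List.cons true)
              ((lists n).filter (fun l => l.count true = j))).card ≤ n.choose j :=
            Finset.card_image_le.trans (ih j)
          have b2 : (Finset.image (List.cons false)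
              ((lists n).filter (fun l => l.count true = j + 1))).card ≤ n.choose (j+1) :=
            Finset.card_image_le.trans (ih (j+1))
          rw [Nat.choose_succ_succ, Nat.succ_eq_add_one]
          omega

noncomputable def maskOf (y b : List Bool) : List Bool :=
  if h : y.Sublist b then (exists_mask h).choose else []

lemma maskOf_spec {y b : List Bool} (h : y.Sublist b) :
    (maskOf y b).length = b.length ∧ sel (maskOf y b) b = y := by
  rw [maskOf, dif_pos h]
  exact (exists_mask h).choose_spec

lemma sup_bound (k n : ℕ) (hkn : k ≤ n) (y : List Bool) (hy : y.length = n - k) :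
    ((lists n).filter (fun b => y.Sublist b)).card ≤ n.choose k * 2 ^ k := by
  have hcard : (((lists n).filter (fun l => l.count true = n - k)) ×ˢ lists k).card
      ≤ n.choose k * 2 ^ k := by
    rw [Finset.card_product]
    exact Nat.mul_le_mul ((card_masks n (n - k)).trans (le_of_eq (Nat.choose_symm hkn)))
      (card_lists k)
  refine le_trans (Finset.card_le_card_of_injOn
    (fun b => (maskOf y b, seln (maskOf y b) b)) ?_ ?_) hcard
  · intro b hb
    rw [Finset.mem_coe, Finset.mem_filter] at hb
    obtain ⟨hbl, hsub⟩ := hb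
    rw [mem_lists] at hbl
    obtain ⟨hlen, hsel⟩ := maskOf_spec hsub
    have hct : (maskOf y b).count true = n - k := by
      rw [← sel_length _ _ hlen, hsel, hy]
    rw [Finset.mem_coe, Finset.mem_product]
    constructor
    · rw [Finset.mem_filter, mem_lists]
      exact ⟨hlen.trans hbl, hct⟩
    · rw [mem_lists, seln_length _ _ hlen]
      have h3 := count_true_add_count_false (maskOf y b)
      omega
  · intro b1 hb1 b2 hb2 heq
    simp only [Finset.coe_filter, Set.mem_setOf_eq] at hb1 hb2
    obtain ⟨hl1, hs1⟩ := hb1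
    obtain ⟨hl2, hs2⟩ := hb2
    obtain ⟨hm1, hy1⟩ := maskOf_spec hs1
    obtain ⟨hm2, hy2⟩ := maskOf_spec hs2
    have h1 : maskOf y b1 = maskOf y b2 := congrArg Prod.fst heq
    have h2 : seln (maskOf y b1) b1 = seln (maskOf y b2) b2 := congrArg Prod.snd heq
    calc b1 = merge (maskOf y b1) (sel (maskOf y b1) b1) (seln (maskOf y b1) b1) :=
          (merge_sel _ _ hm1).symm
      _ = merge (maskOf y b2) (sel (maskOf y b2) b2) (seln (maskOf y b2) b2) := by
          rw [hy1, hy2, h2, h1]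
      _ = b2 := merge_sel _ _ hm2

lemma conflict_bound (k n : ℕ) (hkn : k ≤ n) (a : List Bool) (ha : a.length = n) :
    ((lists n).filter (fun b => ∃ y, y ∈ Subseq k a ∧ y ∈ Subseq k b)).card
      ≤ n.choose k * (n.choose k * 2 ^ k) := by
  have hsub : (lists n).filter (fun b => ∃ y, y ∈ Subseq k a ∧ y ∈ Subseq k b) ⊆
      (a.sublistsLen (n - k)).toFinset.biUnion
        (fun y => (lists n).filter (fun b => y.Sublist b)) := by
    intro b hb
    rw [Finset.mem_filter] at hb
    obtain ⟨hbl, y, ⟨hya, hyla⟩, ⟨hyb, hylb⟩⟩ := hb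
    rw [Finset.mem_biUnion]
    refine ⟨y, ?_, ?_⟩
    · rw [List.mem_toFinset, List.mem_sublistsLen]
      exact ⟨hya, by omega⟩
    · rw [Finset.mem_filter]
      exact ⟨hbl, hyb⟩
  refine le_trans (Finset.card_le_card hsub) ?_
  refine le_trans (Finset.card_biUnion_le_card_mul _ _ (n.choose k * 2 ^ k) ?_) ?_
  · intro y hy
    rw [List.mem_toFinset, List.mem_sublistsLen] at hy
    exact sup_bound k n hkn y hy.2
  · refine Nat.mul_le_mul_right _ ?_
    refine le_trans (a.sublistsLen (n - k)).toFinset_card_le ?_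
    rw [List.length_sublistsLen, ha, Nat.choose_symm hkn]

lemma pow_two_le_fact_sq : ∀ k : ℕ, 2 ^ k ≤ 2 * (k.factorial * k.factorial)
  | 0 => by norm_num
  | 1 => by norm_num [Nat.factorial]
  | (k+2) => by
      have ih := pow_two_le_fact_sq (k+1)
      have hf : (k+2).factorial = (k+2) * (k+1).factorial := Nat.factorial_succ _
      have hfp : 1 ≤ (k+1).factorial := Nat.one_le_iff_ne_zero.mpr (Nat.factorial_ne_zero _)
      calc 2 ^ (k+2) = 2 * 2 ^ (k+1) := by ring
        _ ≤ 2 * (2 * ((k+1).factorial * (k+1).factorial)) := Nat.mul_le_mul_left 2 ih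
        _ = (2 * 2) * ((k+1).factorial * (k+1).factorial) := by ring
        _ ≤ ((k+2) * (k+2)) * ((k+1).factorial * (k+1).factorial) :=
            Nat.mul_le_mul_right _ (Nat.mul_le_mul (by omega) (by omega))
        _ ≤ 2 * (((k+2) * (k+2)) * ((k+1).factorial * (k+1).factorial)) :=
            Nat.le_mul_of_pos_left _ (by norm_num)
        _ = 2 * ((k+2).factorial * (k+2).factorial) := by rw [hf]; ring

lemma choose_sq_bound (k n : ℕ) :
    n.choose k * (n.choose k * 2 ^ k) ≤ 2 * n ^ (2 * k) := by
  have h1 : n.choose k * k.factorial ≤ n ^ k := by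
    have h := Nat.descFactorial_le_pow n k
    rw [Nat.descFactorial_eq_factorial_mul_choose] at h
    calc n.choose k * k.factorial = k.factorial * n.choose k := mul_comm _ _
      _ ≤ n ^ k := h
  have h2 := pow_two_le_fact_sq k
  calc n.choose k * (n.choose k * 2 ^ k)
      ≤ n.choose k * (n.choose k * (2 * (k.factorial * k.factorial))) :=
        Nat.mul_le_mul_left _ (Nat.mul_le_mul_left _ h2)
    _ = 2 * ((n.choose k * k.factorial) * (n.choose k * k.factorial)) := by ring
    _ ≤ 2 * (n ^ k * n ^ k) := Nat.mul_le_mul_left _ (Nat.mul_le_mul h1 h1)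
    _ = 2 * n ^ (2 * k) := by rw [two_mul k, pow_add]

lemma greedy {α : Type*} (R : α → α → Prop) (hsym : ∀ a b, R a b → R b a)
    (M : ℕ) (hM : 0 < M) :
    ∀ s : Finset α, (∀ a ∈ s, ((s.filter (fun b => R a b ∧ b ≠ a)).card) < M) →
      ∃ f : α → Fin M, ∀ a ∈ s, ∀ b ∈ s, a ≠ b → R a b → f a ≠ f b := by
  classical
  intro s
  induction s using Finset.induction_on with
  | empty =>
      intro _
      exact ⟨fun _ => ⟨0, hM⟩, fun a ha => absurd ha (Finset.notMem_empty a)⟩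
  | @insert a s ha ih =>
      intro hdeg
      obtain ⟨f, hf⟩ := ih (fun b hb =>
        lt_of_le_of_lt
          (Finset.card_le_card (Finset.filter_subset_filter _ (Finset.subset_insert a s)))
          (hdeg b (Finset.mem_insert_of_mem hb)))
      have hsubN : s.filter (fun b => R a b) ⊆
          (insert a s).filter (fun b => R a b ∧ b ≠ a) := by
        intro b hb
        rw [Finset.mem_filter] at hb
        rw [Finset.mem_filter]
        exact ⟨Finset.mem_insert_of_mem hb.1, hb.2, fun h => ha (h ▸ hb.1)⟩
      have hN : ((s.filter (fun b => R a b)).image f).card < M :=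
        lt_of_le_of_lt (le_trans Finset.card_image_le (Finset.card_le_card hsubN))
          (hdeg a (Finset.mem_insert_self a s))
      obtain ⟨c, hc⟩ : ∃ c : Fin M, c ∉ (s.filter (fun b => R a b)).image f := by
        by_contra hcon
        push_neg at hcon
        have huniv : (Finset.univ : Finset (Fin M)) ⊆ (s.filter (fun b => R a b)).image f :=
          fun c _ => hcon c
        have := Finset.card_le_card huniv
        rw [Finset.card_univ, Fintype.card_fin] at this
        omega
      refine ⟨fun x => if x = a then c else f x, ?_⟩
      intro u hu v hv huv hR
      rcases Finset.mem_insert.1 hu with rfl | hu' <;>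
        rcases Finset.mem_insert.1 hv with rfl | hv'
      · exact absurd rfl huv
      · have hva : v ≠ u := fun h => ha (h ▸ hv')
        show (if u = u then c else f u) ≠ (if v = u then c else f v)
        rw [if_pos rfl, if_neg hva]
        intro hcv
        apply hc
        rw [hcv]
        exact Finset.mem_image_of_mem f (Finset.mem_filter.mpr ⟨hv', hR⟩)
      · have hua : u ≠ v := fun h => ha (h ▸ hu')
        show (if u = v then c else f u) ≠ (if v = v then c else f v)
        rw [if_pos rfl, if_neg hua]
        intro hcv
        apply hc
        rw [← hcv]
        exact Finset.mem_image_of_mem f (Finset.mem_filter.mpr ⟨hu', hsym _ _ hR⟩)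
      · have hua : u ≠ a := fun h => ha (h ▸ hu')
        have hva : v ≠ a := fun h => ha (h ▸ hv')
        show (if u = a then c else f u) ≠ (if v = a then c else f v)
        rw [if_neg hua, if_neg hva]
        exact hf u hu' v hv' huv hR

def enc : ℕ → ℕ → List Bool
  | 0, _ => []
  | m+1, v => (v % 2 == 1) :: enc m (v / 2)

def dec : List Bool → ℕ
  | [] => 0
  | b :: l => (if b then 1 else 0) + 2 * dec l

lemma enc_length : ∀ m v, (enc m v).length = m
  | 0, _ => rfl
  | m+1, v => by simp [enc, enc_length m (v / 2)]

lemma dec_enc : ∀ m v, v < 2 ^ m → dec (enc m v) = v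
  | 0, v, h => by
      simp only [pow_zero] at h
      simp [enc, dec]
      omega
  | m+1, v, h => by
      have h2 : v / 2 < 2 ^ m := by
        have hp : 2 ^ (m+1) = 2 * 2 ^ m := by ring
        omega
      simp only [enc, dec, dec_enc m (v / 2) h2]
      rcases Nat.mod_two_eq_zero_or_one v with hm | hm <;> simp [hm] <;> omega

lemma m_exists (k n : ℕ) (hk : 1 ≤ k) (hn : 2 ≤ n) :
    ∃ m : ℕ, (m : ℝ) ≤ 2 * (k : ℝ) * Real.logb 2 n + 2 ∧
      2 * n ^ (2 * k) ≤ 2 ^ m := by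
  set t := 2 * (k : ℝ) * Real.logb 2 n with ht
  have hn1 : (1 : ℝ) ≤ (n : ℝ) := by exact_mod_cast le_trans (by norm_num) hn
  have hn0 : (0 : ℝ) < (n : ℝ) := by linarith
  have ht0 : 0 ≤ t := by
    apply mul_nonneg (by positivity)
    exact Real.logb_nonneg (by norm_num) hn1
  refine ⟨Nat.floor t + 2, ?_, ?_⟩
  · push_cast
    have := Nat.floor_le ht0
    linarith
  · have hpow : (n : ℝ) ^ (2 * k) = (2 : ℝ) ^ t := by
      have hrw : (n : ℝ) = (2 : ℝ) ^ (Real.logb 2 n) :=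
        (Real.rpow_logb (by norm_num) (by norm_num) hn0).symm
      rw [hrw]
      rw [← Real.rpow_natCast ((2:ℝ) ^ (Real.logb 2 n)) (2 * k)]
      rw [← Real.rpow_mul (by norm_num)]
      congr 1
      push_cast
      ring
    have hm : t + 1 ≤ ((Nat.floor t + 2 : ℕ) : ℝ) := by
      push_cast
      have := Nat.lt_floor_add_one t
      linarith
    have h2 : (2 : ℝ) ^ (t + 1) ≤ (2 : ℝ) ^ (((Nat.floor t + 2 : ℕ) : ℝ)) :=
      Real.rpow_le_rpow_of_exponent_le (by norm_num) hm
    rw [Real.rpow_add (by norm_num), Real.rpow_one] at h2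
    rw [Real.rpow_natCast] at h2
    have hfin : 2 * (n : ℝ) ^ (2 * k) ≤ (2 : ℝ) ^ (Nat.floor t + 2) := by
      rw [hpow]
      linarith
    exact_mod_cast hfin

theorem stmt_2 (k n : ℕ) (hk : 1 ≤ k) (hkn : k ≤ n) (hn : 2 ≤ n) :
    ∃ m : ℕ, (m : ℝ) ≤ 2 * (k : ℝ) * Real.logb 2 n + 2 ∧
      ∃ (hash₁ : List Bool → List Bool) (D : List Bool → List Bool → List Bool),
        (∀ x : List Bool, x.length = n → (hash₁ x).length = m) ∧
        (∀ x : List Bool, x.length = n → ∀ y ∈ Subseq k x, D y (hash₁ x) = x) := by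
  classical
  obtain ⟨m, hm1, hm2⟩ := m_exists k n hk hn
  have hM : 0 < 2 ^ m := pow_pos (by norm_num) m
  obtain ⟨f, hf⟩ := greedy (fun a b => ∃ y, y ∈ Subseq k a ∧ y ∈ Subseq k b)
    (fun a b ⟨y, h1, h2⟩ => ⟨y, h2, h1⟩) (2 ^ m) hM (lists n) (by
      intro a ha
      rw [Finset.filter_congr_decidable]
      show ((lists n).filter
        (fun b => (∃ y, y ∈ Subseq k a ∧ y ∈ Subseq k b) ∧ b ≠ a)).card < 2 ^ m
      have haln : a.length = n := (mem_lists n a).mp ha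
      have hsubE : (lists n).filter
            (fun b => (∃ y, y ∈ Subseq k a ∧ y ∈ Subseq k b) ∧ b ≠ a) ⊆
          ((lists n).filter (fun b => ∃ y, y ∈ Subseq k a ∧ y ∈ Subseq k b)).erase a := by
        intro b hb
        rw [Finset.mem_filter] at hb
        rw [Finset.mem_erase, Finset.mem_filter]
        exact ⟨hb.2.2, hb.1, hb.2.1⟩
      have haa : a ∈ (lists n).filter (fun b => ∃ y, y ∈ Subseq k a ∧ y ∈ Subseq k b) := by
        rw [Finset.mem_filter]
        exact ⟨ha, a.drop k,
          ⟨List.drop_sublist k a, by rw [List.length_drop]; omega⟩,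
          ⟨List.drop_sublist k a, by rw [List.length_drop]; omega⟩⟩
      have hcb := conflict_bound k n hkn a haln
      have hcs := choose_sq_bound k n
      have hcard := Finset.card_le_card hsubE
      rw [Finset.card_erase_of_mem haa] at hcard
      have hFpos : 0 < ((lists n).filter
          (fun b => ∃ y, y ∈ Subseq k a ∧ y ∈ Subseq k b)).card :=
        Finset.card_pos.mpr ⟨a, haa⟩
      omega)
  refine ⟨m, hm1, fun x => enc m (f x).val,
    fun y h => if hx : ∃ x, x.length = n ∧ y ∈ Subseq k x ∧ enc m (f x).val = h
      then hx.choose else [], fun x _ => enc_length m _, ?_⟩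
  intro x hx y hy
  have hex : ∃ x', x'.length = n ∧ y ∈ Subseq k x' ∧
      enc m (f x').val = enc m (f x).val := ⟨x, hx, hy, rfl⟩
  show (if hx' : ∃ x', x'.length = n ∧ y ∈ Subseq k x' ∧
      enc m (f x').val = enc m (f x).val then hx'.choose else []) = x
  rw [dif_pos hex]
  obtain ⟨h1, h2, h3⟩ := hex.choose_spec
  have hfe : f hex.choose = f x := by
    have hc := congrArg dec h3
    rw [dec_enc m _ (f hex.choose).isLt, dec_enc m _ (f x).isLt] at hc
    exact Fin.ext hc
  by_contra hne
  exact hf hex.choose ((mem_lists n _).mpr h1) x ((mem_lists n _).mpr hx) hne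
    ⟨y, h2, hy⟩ hfe
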